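/- arXiv:2306.04178 — 2 statements merged into one kernel-verified Lean document; each statement's English description precedes it below -/
import Mathlib

section
/- Let Q be a Borel probability measure on ℝ^n, let p ≥ 1 be a real exponent, let ρ ≥ 0, and let L : ℝ^n → ℝ be bounded and continuous. Then the supremum, over all Borel probability measures Q̃ on ℝ^n with W_p(Q̃, Q) ≤ ρ, of ∫ L dQ̃ equals the supremum, over all Borel probability measures γ on ℝ^n × ℝ^n whose first marginal is Q and which satisfy (∫ ‖x − y‖₂^p dγ(x,y))^{1/p} ≤ ρ, of ∫ L(y) dγ(x,y). (This is the reformulation of the Wasserstein-ball distributionally robust objective as an optimization over couplings with bounded transport cost.) -/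
open MeasureTheory
open scoped ENNReal

/-- The `p`-transport cost of a coupling `γ` on `ℝⁿ × ℝⁿ`:
`(∫ ‖x − y‖₂ᵖ dγ(x,y))^{1/p}`, valued in `[0, ∞]`. -/
noncomputable def transportCost {n : ℕ} (p : ℝ)
    (γ : Measure (EuclideanSpace ℝ (Fin n) × EuclideanSpace ℝ (Fin n))) : ℝ≥0∞ :=
  (∫⁻ z, ENNReal.ofReal ‖z.1 - z.2‖ ^ p ∂γ) ^ (1 / p)

/-- The `p`-Wasserstein distance: infimum of the transport cost over all couplings
whose first marginal is `P` and second marginal is `Q`. -/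
noncomputable def wassersteinDist {n : ℕ} (p : ℝ)
    (P Q : Measure (EuclideanSpace ℝ (Fin n))) : ℝ≥0∞ :=
  ⨅ (γ : Measure (EuclideanSpace ℝ (Fin n) × EuclideanSpace ℝ (Fin n)))
    (_ : γ.fst = P) (_ : γ.snd = Q), transportCost p γ

namespace DRAux

variable {n : ℕ}

local notation "X" => EuclideanSpace ℝ (Fin n)

lemma costFun_measurable (p : ℝ) :
    Measurable fun z : X × X => ENNReal.ofReal ‖z.1 - z.2‖ ^ p :=
  ((continuous_fst.sub continuous_snd).norm.measurable.ennreal_ofReal).pow_const p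

/-- The cost integrand as `edist`. -/
lemma cost_eq_edist (z : X × X) : ENNReal.ofReal ‖z.1 - z.2‖ = edist z.1 z.2 := by
  rw [edist_dist, dist_eq_norm]

lemma lintegral_cost_swap (p : ℝ) (γ : Measure (X × X)) :
    (∫⁻ z, ENNReal.ofReal ‖z.1 - z.2‖ ^ p ∂(γ.map Prod.swap)) =
    ∫⁻ z, ENNReal.ofReal ‖z.1 - z.2‖ ^ p ∂γ := by
  rw [lintegral_map (costFun_measurable p) measurable_swap]
  simp_rw [Prod.fst_swap, Prod.snd_swap, norm_sub_rev]

lemma transportCost_swap (p : ℝ) (γ : Measure (X × X)) :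
    transportCost p (γ.map Prod.swap) = transportCost p γ := by
  unfold transportCost
  rw [lintegral_cost_swap]

lemma diag_measurable : Measurable fun x : X => (x, x) :=
  measurable_id.prodMk measurable_id

lemma diag_fst (μ : Measure X) : (μ.map fun x : X => (x, x)).fst = μ := by
  rw [Measure.fst, Measure.map_map measurable_fst diag_measurable]
  have h : (Prod.fst ∘ fun x : X => (x, x)) = id := rfl
  rw [h, Measure.map_id]

lemma diag_snd (μ : Measure X) : (μ.map fun x : X => (x, x)).snd = μ := by
  rw [Measure.snd, Measure.map_map measurable_snd diag_measurable]
  have h : (Prod.snd ∘ fun x : X => (x, x)) = id := rfl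
  rw [h, Measure.map_id]

lemma lintegral_cost_diag {p : ℝ} (hp : 1 ≤ p) (μ : Measure X) :
    (∫⁻ z, ENNReal.ofReal ‖z.1 - z.2‖ ^ p ∂(μ.map fun x : X => (x, x))) = 0 := by
  rw [lintegral_map (costFun_measurable p) diag_measurable]
  simp [ENNReal.zero_rpow_of_pos (lt_of_lt_of_le one_pos hp)]

lemma transportCost_diag {p : ℝ} (hp : 1 ≤ p) (μ : Measure X) :
    transportCost p (μ.map fun x : X => (x, x)) = 0 := by
  unfold transportCost
  rw [lintegral_cost_diag hp]
  exact ENNReal.zero_rpow_of_pos (by positivity)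

lemma integrable_comp_snd {L : X → ℝ} (hLc : Continuous L) {C : ℝ} (hLb : ∀ x, |L x| ≤ C)
    (γ : Measure (X × X)) [IsFiniteMeasure γ] :
    Integrable (fun z : X × X => L z.2) γ :=
  ⟨(hLc.comp continuous_snd).aestronglyMeasurable,
    HasFiniteIntegral.of_bounded (C := C) (ae_of_all _ fun z => by
      simpa [Real.norm_eq_abs] using hLb z.2)⟩

lemma integral_snd_eq {L : X → ℝ} (hLc : Continuous L) (γ : Measure (X × X)) :
    (∫ z, L z.2 ∂γ) = ∫ x, L x ∂γ.snd := by
  rw [Measure.snd, integral_map measurable_snd.aemeasurable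
    (hLc.aestronglyMeasurable)]

lemma abs_integral_le {L : X → ℝ} {C : ℝ} (hLb : ∀ x, |L x| ≤ C)
    (μ : Measure X) [IsProbabilityMeasure μ] : |∫ x, L x ∂μ| ≤ C := by
  have := norm_integral_le_of_norm_le_const (μ := μ) (f := L) (C := C)
    (ae_of_all _ fun x => by simpa [Real.norm_eq_abs] using hLb x)
  simpa [Real.norm_eq_abs] using this

/-- Pointwise inequality: for `p ≥ 1` and `0 < e < ∞`, `a ≤ e + a^p * e^(1-p)`. -/
lemma pointwise_rpow_bound {p : ℝ} (hp : 1 ≤ p) {a e : ℝ≥0∞} (he0 : e ≠ 0) (heT : e ≠ ⊤) :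
    a ≤ e + a ^ p * e ^ (1 - p) := by
  rcases le_total a e with h | h
  · exact h.trans le_self_add
  · have ha0 : a ≠ 0 := fun h0 => he0 (le_antisymm (h0 ▸ h) zero_le)
    rcases eq_or_ne a ⊤ with rfl | haT
    · have h1 : (⊤ : ℝ≥0∞) ^ p = ⊤ := ENNReal.top_rpow_of_pos (by linarith)
      have h2 : e ^ (1 - p) ≠ 0 := by
        intro h0
        rcases ENNReal.rpow_eq_zero_iff.mp h0 with ⟨hh, _⟩ | ⟨hh, _⟩
        · exact he0 hh
        · exact heT hh
      rw [h1, ENNReal.top_mul h2]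
      simp
    · have key : a = a ^ p * a ^ (1 - p) := by
        rw [← ENNReal.rpow_add p (1 - p) ha0 haT]
        norm_num
      have h2 : a ^ (1 - p) ≤ e ^ (1 - p) := by
        have hh : e ^ (p - 1) ≤ a ^ (p - 1) := ENNReal.rpow_le_rpow h (by linarith)
        have e1 : a ^ (1 - p) = (a ^ (p - 1))⁻¹ := by
          rw [show (1 - p) = -(p - 1) by ring, ENNReal.rpow_neg]
        have e2 : e ^ (1 - p) = (e ^ (p - 1))⁻¹ := by
          rw [show (1 - p) = -(p - 1) by ring, ENNReal.rpow_neg]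
        rw [e1, e2]
        exact ENNReal.inv_le_inv.mpr hh
      calc a = a ^ p * a ^ (1 - p) := key
        _ ≤ a ^ p * e ^ (1 - p) := by gcongr
        _ ≤ e + a ^ p * e ^ (1 - p) := le_add_self

/-- If the `p`-cost of a coupling is at most `ε^p`, its expected distance is at most `2ε`. -/
lemma lintegral_edist_le {p : ℝ} (hp : 1 ≤ p) {ε : ℝ} (hε : 0 < ε)
    (γ : Measure (X × X)) [IsProbabilityMeasure γ]
    (h : (∫⁻ z, ENNReal.ofReal ‖z.1 - z.2‖ ^ p ∂γ) ≤ ENNReal.ofReal ε ^ p) :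
    (∫⁻ z, edist z.1 z.2 ∂γ) ≤ ENNReal.ofReal (2 * ε) := by
  set e : ℝ≥0∞ := ENNReal.ofReal ε with he
  have he0 : e ≠ 0 := by simp [he, hε]
  have heT : e ≠ ⊤ := by simp [he]
  calc (∫⁻ z, edist z.1 z.2 ∂γ)
      ≤ ∫⁻ z, (e + ENNReal.ofReal ‖z.1 - z.2‖ ^ p * e ^ (1 - p)) ∂γ := by
        refine lintegral_mono fun z => ?_
        rw [← cost_eq_edist z]
        exact pointwise_rpow_bound hp he0 heT
    _ = e + (∫⁻ z, ENNReal.ofReal ‖z.1 - z.2‖ ^ p ∂γ) * e ^ (1 - p) := by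
        rw [lintegral_add_left measurable_const,
          lintegral_mul_const _ (costFun_measurable p)]
        simp
    _ ≤ e + e ^ p * e ^ (1 - p) := by
        gcongr
    _ = e + e := by
        rw [← ENNReal.rpow_add p (1 - p) he0 heT]
        norm_num
    _ = ENNReal.ofReal (2 * ε) := by
        rw [two_mul, ENNReal.ofReal_add hε.le hε.le]

/-- Lipschitz-type bound for the thickened indicator auxiliary function. -/
lemma thickenedIndicatorAux_le_add {δ : ℝ} (F : Set X) (x y : X) :
    thickenedIndicatorAux δ F x ≤
      thickenedIndicatorAux δ F y + edist x y / ENNReal.ofReal δ := by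
  unfold thickenedIndicatorAux
  have hy : Metric.infEDist y F ≤ Metric.infEDist x F + edist x y := by
    simpa [edist_comm] using
      (Metric.infEDist_le_infEDist_add_edist (x := y) (y := x) (s := F))
  have hdiv : Metric.infEDist y F / ENNReal.ofReal δ ≤
      Metric.infEDist x F / ENNReal.ofReal δ + edist x y / ENNReal.ofReal δ := by
    rw [← ENNReal.add_div]
    exact ENNReal.div_le_div_right hy _
  calc (1 : ℝ≥0∞) - Metric.infEDist x F / ENNReal.ofReal δ
      ≤ 1 - (Metric.infEDist x F / ENNReal.ofReal δ + edist x y / ENNReal.ofReal δ)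
          + edist x y / ENNReal.ofReal δ := by
        rw [tsub_add_eq_tsub_tsub]
        exact le_tsub_add
    _ ≤ 1 - Metric.infEDist y F / ENNReal.ofReal δ + edist x y / ENNReal.ofReal δ := by
        gcongr

lemma thickenedIndicatorAux_measurable {δ : ℝ} (hδ : 0 < δ) (F : Set X) :
    Measurable (thickenedIndicatorAux δ F : X → ℝ≥0∞) :=
  (continuous_thickenedIndicatorAux hδ F).measurable

/-- One-sided comparison of integrals of a fixed thickened indicator along a coupling. -/
lemma lintegral_thick_le {δ : ℝ} (hδ : 0 < δ) (F : Set X)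
    (γ : Measure (X × X)) [IsProbabilityMeasure γ] {c : ℝ≥0∞}
    (hc : (∫⁻ z, edist z.1 z.2 ∂γ) ≤ c) :
    (∫⁻ x, thickenedIndicatorAux δ F x ∂γ.fst) ≤
      (∫⁻ x, thickenedIndicatorAux δ F x ∂γ.snd) + c / ENNReal.ofReal δ := by
  have gm := thickenedIndicatorAux_measurable hδ F
  rw [Measure.fst, Measure.snd, lintegral_map gm measurable_fst,
    lintegral_map gm measurable_snd]
  calc (∫⁻ z, thickenedIndicatorAux δ F z.1 ∂γ)
      ≤ ∫⁻ z, (thickenedIndicatorAux δ F z.2 + edist z.1 z.2 / ENNReal.ofReal δ) ∂γ :=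
        lintegral_mono fun z => thickenedIndicatorAux_le_add F z.1 z.2
    _ = (∫⁻ z, thickenedIndicatorAux δ F z.2 ∂γ)
          + (∫⁻ z, edist z.1 z.2 ∂γ) / ENNReal.ofReal δ := by
        rw [lintegral_add_left
          (show Measurable fun z : X × X => thickenedIndicatorAux δ F z.2 from
            gm.comp measurable_snd)]
        simp only [div_eq_mul_inv]
        rw [lintegral_mul_const _ (continuous_edist.measurable)]
    _ ≤ (∫⁻ z, thickenedIndicatorAux δ F z.2 ∂γ) + c / ENNReal.ofReal δ := by
        gcongr

lemma abs_integral_snd_le {L : X → ℝ} {C : ℝ} (hLb : ∀ x, |L x| ≤ C)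
    (γ : Measure (X × X)) [IsProbabilityMeasure γ] : |∫ z, L z.2 ∂γ| ≤ C := by
  have := norm_integral_le_of_norm_le_const (μ := γ) (f := fun z : X × X => L z.2) (C := C)
    (ae_of_all _ fun z => by simpa [Real.norm_eq_abs] using hLb z.2)
  simpa [Real.norm_eq_abs] using this

lemma fst_smul (c : ℝ≥0∞) (μ : Measure (X × X)) : (c • μ).fst = c • μ.fst :=
  Measure.map_smul c μ Prod.fst

end DRAux

open DRAux in
/-- If the Wasserstein distance between two probability measures vanishes, they are equal. -/
lemma eq_of_wassersteinDist_eq_zero {n : ℕ} {p : ℝ} (hp : 1 ≤ p)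
    (Q' Q : Measure (EuclideanSpace ℝ (Fin n)))
    [IsProbabilityMeasure Q'] [IsProbabilityMeasure Q]
    (h : wassersteinDist p Q' Q ≤ 0) : Q' = Q := by
  set X := EuclideanSpace ℝ (Fin n)
  -- Step 1: good couplings with arbitrarily small expected distance.
  have key : ∀ ε : ℝ, 0 < ε → ∃ γ : Measure (X × X),
      γ.fst = Q' ∧ γ.snd = Q ∧ (∫⁻ z, edist z.1 z.2 ∂γ) ≤ ENNReal.ofReal (2 * ε) := by
    intro ε hε
    have hlt : wassersteinDist p Q' Q < ENNReal.ofReal ε := by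
      refine lt_of_le_of_lt h ?_
      simpa using hε
    rw [wassersteinDist] at hlt
    simp only [iInf_lt_iff] at hlt
    obtain ⟨γ, h1, h2, hc⟩ := hlt
    have hγprob : IsProbabilityMeasure γ := by
      constructor
      have := congrArg (fun μ : Measure X => μ Set.univ) h1
      simp only [Measure.fst_univ] at this
      rw [this]
      exact measure_univ
    refine ⟨γ, h1, h2, ?_⟩
    have hcost : (∫⁻ z, ENNReal.ofReal ‖z.1 - z.2‖ ^ p ∂γ) ≤ ENNReal.ofReal ε ^ p := by
      have hple : transportCost p γ ≤ ENNReal.ofReal ε := hc.le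
      have hP0 : p ≠ 0 := by positivity
      have : (transportCost p γ) ^ p ≤ (ENNReal.ofReal ε) ^ p :=
        ENNReal.rpow_le_rpow hple (by positivity)
      rwa [transportCost, ← ENNReal.rpow_mul, one_div, inv_mul_cancel₀ hP0,
        ENNReal.rpow_one] at this
    exact lintegral_edist_le hp hε γ hcost
  -- Step 2: the lintegrals of thickened indicators agree.
  have thick : ∀ (δ : ℝ), 0 < δ → ∀ F : Set X,
      (∫⁻ x, thickenedIndicatorAux δ F x ∂Q') =
      ∫⁻ x, thickenedIndicatorAux δ F x ∂Q := by
    intro δ hδ F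
    have bd : ∀ μ : Measure X, IsProbabilityMeasure μ →
        (∫⁻ x, thickenedIndicatorAux δ F x ∂μ) ≤ 1 := by
      intro μ hμ
      calc (∫⁻ x, thickenedIndicatorAux δ F x ∂μ) ≤ ∫⁻ _, 1 ∂μ :=
            lintegral_mono fun x => thickenedIndicatorAux_le_one δ F x
        _ = 1 := by simp
    have main : ∀ μ ν : Measure X, IsProbabilityMeasure μ → IsProbabilityMeasure ν →
        (∀ ε : ℝ, 0 < ε → ∃ γ : Measure (X × X),
          γ.fst = μ ∧ γ.snd = ν ∧ (∫⁻ z, edist z.1 z.2 ∂γ) ≤ ENNReal.ofReal (2 * ε)) →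
        (∫⁻ x, thickenedIndicatorAux δ F x ∂μ) ≤
          ∫⁻ x, thickenedIndicatorAux δ F x ∂ν := by
      intro μ ν hμ hν hcoup
      apply ENNReal.le_of_forall_pos_le_add
      intro η hη _
      -- choose ε with ofReal (2ε) / ofReal δ ≤ η : take ε = η * δ / 2
      have hεpos : 0 < (η : ℝ) * δ / 2 := by positivity
      obtain ⟨γ, hfst, hsnd, hedist⟩ := hcoup _ hεpos
      have hγprob : IsProbabilityMeasure γ := by
        constructor
        have := congrArg (fun m : Measure X => m Set.univ) hfst
        simp only [Measure.fst_univ] at this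
        rw [this]; exact measure_univ
      have h2ε : ENNReal.ofReal (2 * ((η : ℝ) * δ / 2)) / ENNReal.ofReal δ = (η : ℝ≥0∞) := by
        have : (2 : ℝ) * ((η : ℝ) * δ / 2) = (η : ℝ) * δ := by ring
        rw [this, ENNReal.ofReal_mul (by positivity), div_eq_mul_inv, mul_assoc,
          ENNReal.mul_inv_cancel (by simp [hδ]) (by simp), mul_one,
          ENNReal.ofReal_coe_nnreal]
      have := lintegral_thick_le hδ F γ hedist
      rw [hfst, hsnd, h2ε] at this
      exact this
    have coup' : ∀ ε : ℝ, 0 < ε → ∃ γ : Measure (X × X),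
        γ.fst = Q ∧ γ.snd = Q' ∧ (∫⁻ z, edist z.1 z.2 ∂γ) ≤ ENNReal.ofReal (2 * ε) := by
      intro ε hε
      obtain ⟨γ, h1, h2, h3⟩ := key ε hε
      refine ⟨γ.map Prod.swap, by simp [h2], by simp [h1], ?_⟩
      rw [lintegral_map (continuous_edist.measurable) measurable_swap]
      simpa [edist_comm] using h3
    exact le_antisymm
      (main Q' Q inferInstance inferInstance key)
      (main Q Q' inferInstance inferInstance coup')
  -- Step 3: equality on closed sets.
  have closed_eq : ∀ F : Set X, IsClosed F → Q' F = Q F := by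
    intro F hF
    have δs_pos : ∀ m : ℕ, 0 < ((m : ℝ) + 1)⁻¹ := fun m => by positivity
    have δs_lim : Filter.Tendsto (fun m : ℕ => ((m : ℝ) + 1)⁻¹) Filter.atTop (nhds 0) :=
      tendsto_one_div_add_atTop_nhds_zero_nat.congr (by intro m; simp [one_div])
    have t1 := tendsto_lintegral_thickenedIndicator_of_isClosed Q' hF δs_pos δs_lim
    have t2 := tendsto_lintegral_thickenedIndicator_of_isClosed Q hF δs_pos δs_lim
    have coee : ∀ (m : ℕ) (μ : Measure X),
        (∫⁻ ω, ((thickenedIndicator (δs_pos m) F) ω : ℝ≥0∞) ∂μ) =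
        ∫⁻ ω, thickenedIndicatorAux ((m : ℝ) + 1)⁻¹ F ω ∂μ := by
      intro m μ
      refine lintegral_congr fun ω => ?_
      rw [thickenedIndicator_apply, ENNReal.coe_toNNReal thickenedIndicatorAux_lt_top.ne]
    have : Filter.Tendsto (fun m : ℕ =>
        ∫⁻ ω, ((thickenedIndicator (δs_pos m) F) ω : ℝ≥0∞) ∂Q') Filter.atTop (nhds (Q F)) := by
      refine t2.congr fun m => ?_
      rw [coee m Q, coee m Q', thick _ (δs_pos m) F]
    exact tendsto_nhds_unique t1 this
  -- Step 4: extensionality via the π-system of closed sets.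
  refine MeasureTheory.ext_of_generate_finite {s : Set X | IsClosed s} ?_
    isPiSystem_isClosed (fun s hs => closed_eq s hs) (closed_eq _ isClosed_univ)
  rw [BorelSpace.measurable_eq (α := X), borel_eq_generateFrom_isClosed]

/-- The Wasserstein-ball distributionally robust objective equals the optimization
over couplings with bounded transport cost. -/
theorem dr_sup_eq_sup_over_couplings {n : ℕ}
    (Q : Measure (EuclideanSpace ℝ (Fin n))) [IsProbabilityMeasure Q]
    (p ρ : ℝ) (hp : 1 ≤ p) (hρ : 0 ≤ ρ)
    (L : EuclideanSpace ℝ (Fin n) → ℝ) (hLc : Continuous L)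
    (C : ℝ) (hLb : ∀ x, |L x| ≤ C) :
    sSup {r : ℝ | ∃ Q' : Measure (EuclideanSpace ℝ (Fin n)), IsProbabilityMeasure Q' ∧
        wassersteinDist p Q' Q ≤ ENNReal.ofReal ρ ∧ r = ∫ x, L x ∂Q'} =
    sSup {r : ℝ | ∃ γ : Measure (EuclideanSpace ℝ (Fin n) × EuclideanSpace ℝ (Fin n)),
        IsProbabilityMeasure γ ∧ γ.fst = Q ∧ transportCost p γ ≤ ENNReal.ofReal ρ ∧
        r = ∫ z, L z.2 ∂γ} := by
  have hC0 : 0 ≤ C := le_trans (abs_nonneg _) (hLb 0)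
  have hP0 : p ≠ 0 := by positivity
  set Δ : Measure (EuclideanSpace ℝ (Fin n) × EuclideanSpace ℝ (Fin n)) :=
    Q.map (fun x => (x, x)) with hΔdef
  haveI : IsProbabilityMeasure Δ :=
    Measure.isProbabilityMeasure_map DRAux.diag_measurable.aemeasurable
  have hΔfst : Δ.fst = Q := DRAux.diag_fst Q
  have hΔsnd : Δ.snd = Q := DRAux.diag_snd Q
  have hΔcost : transportCost p Δ = 0 := DRAux.transportCost_diag hp Q
  set S1 := {r : ℝ | ∃ Q' : Measure (EuclideanSpace ℝ (Fin n)), IsProbabilityMeasure Q' ∧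
      wassersteinDist p Q' Q ≤ ENNReal.ofReal ρ ∧ r = ∫ x, L x ∂Q'} with hS1
  set S2 := {r : ℝ | ∃ γ : Measure (EuclideanSpace ℝ (Fin n) × EuclideanSpace ℝ (Fin n)),
      IsProbabilityMeasure γ ∧ γ.fst = Q ∧ transportCost p γ ≤ ENNReal.ofReal ρ ∧
      r = ∫ z, L z.2 ∂γ} with hS2
  have bdd1 : BddAbove S1 := by
    refine ⟨C, fun r hr => ?_⟩
    obtain ⟨Q', hQ'p, _, rfl⟩ := hr
    haveI := hQ'p
    exact (abs_le.mp (DRAux.abs_integral_le hLb Q')).2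
  have bdd2 : BddAbove S2 := by
    refine ⟨C, fun r hr => ?_⟩
    obtain ⟨γ, hγp, _, _, rfl⟩ := hr
    haveI := hγp
    exact (abs_le.mp (DRAux.abs_integral_snd_le hLb γ)).2
  have hΔmem : (∫ z, L z.2 ∂Δ) ∈ S2 :=
    ⟨Δ, inferInstance, hΔfst, by rw [hΔcost]; exact zero_le, rfl⟩
  have hWQQ : wassersteinDist p Q Q ≤ ENNReal.ofReal ρ := by
    have h : wassersteinDist p Q Q ≤ transportCost p Δ := by
      rw [wassersteinDist]
      exact iInf_le_of_le Δ (iInf_le_of_le hΔfst (iInf_le _ hΔsnd))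
    rw [hΔcost] at h
    exact h.trans zero_le
  have ne1 : S1.Nonempty := ⟨_, Q, inferInstance, hWQQ, rfl⟩
  have sub21 : S2 ⊆ S1 := by
    rintro r ⟨γ, hγp, hγfst, hγc, rfl⟩
    haveI := hγp
    haveI : IsProbabilityMeasure γ.snd := ⟨by rw [Measure.snd_univ]; exact measure_univ⟩
    refine ⟨γ.snd, inferInstance, ?_, DRAux.integral_snd_eq hLc γ⟩
    have h : wassersteinDist p γ.snd Q ≤ transportCost p (γ.map Prod.swap) := by
      rw [wassersteinDist]
      exact iInf_le_of_le (γ.map Prod.swap)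
        (iInf_le_of_le Measure.fst_map_swap
          (iInf_le _ (by rw [Measure.snd_map_swap, hγfst])))
    rw [DRAux.transportCost_swap] at h
    exact h.trans hγc
  refine le_antisymm (csSup_le ne1 ?_) (csSup_le_csSup bdd1 ⟨_, hΔmem⟩ sub21)
  rintro r ⟨Q', hQ'p, hW, rfl⟩
  haveI := hQ'p
  rcases hρ.lt_or_eq with hρpos | hρ0
  · -- positive radius: mixture argument
    refine le_of_forall_pos_le_add fun η hη => ?_
    set δ := min (η / (2 * C + 1)) (1 / 2) with hδdef
    have hδpos : 0 < δ := lt_min (by positivity) (by norm_num)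
    have hδlt1 : δ < 1 := lt_of_le_of_lt (min_le_right _ _) (by norm_num)
    have h1δ : 0 < 1 - δ := by linarith
    set B := ρ * ((1 - δ)⁻¹) ^ (1 / p) with hBdef
    have hBgt : ρ < B := by
      have h1 : 1 < (1 - δ)⁻¹ := (one_lt_inv₀ h1δ).mpr (by linarith)
      have h2 : 1 < ((1 - δ)⁻¹) ^ (1 / p) :=
        Real.one_lt_rpow_iff_of_pos (by positivity) |>.mpr (Or.inl ⟨h1, by positivity⟩)
      exact lt_mul_of_one_lt_right hρpos h2
    have hBpos : 0 < B := hρpos.trans hBgt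
    have hlt : wassersteinDist p Q' Q < ENNReal.ofReal B :=
      lt_of_le_of_lt hW ((ENNReal.ofReal_lt_ofReal_iff hBpos).mpr hBgt)
    rw [wassersteinDist] at hlt
    simp only [iInf_lt_iff] at hlt
    obtain ⟨γ₀, hγ₀fst, hγ₀snd, hγ₀c⟩ := hlt
    haveI hγ₀prob : IsProbabilityMeasure γ₀ := by
      constructor
      have h := congrArg (fun m : Measure (EuclideanSpace ℝ (Fin n)) => m Set.univ) hγ₀fst
      simp only [Measure.fst_univ] at h
      rw [h]; exact measure_univ
    have hIc : (∫⁻ z, ENNReal.ofReal ‖z.1 - z.2‖ ^ p ∂γ₀) ≤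
        ENNReal.ofReal (ρ ^ p * (1 - δ)⁻¹) := by
      have h1 : transportCost p γ₀ ≤ ENNReal.ofReal B := hγ₀c.le
      have h2 := ENNReal.rpow_le_rpow h1 (le_of_lt (by positivity : (0:ℝ) < p))
      rw [transportCost, ← ENNReal.rpow_mul, one_div, inv_mul_cancel₀ hP0,
        ENNReal.rpow_one] at h2
      refine h2.trans_eq ?_
      rw [ENNReal.ofReal_rpow_of_nonneg hBpos.le (by positivity)]
      congr 1
      rw [hBdef, Real.mul_rpow hρ (Real.rpow_nonneg (by positivity) _),
        ← Real.rpow_mul (by positivity), one_div, inv_mul_cancel₀ hP0, Real.rpow_one]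
    set γ₁ := γ₀.map Prod.swap with hγ₁def
    have hγ₁fst : γ₁.fst = Q := by rw [hγ₁def, Measure.fst_map_swap, hγ₀snd]
    have hγ₁snd : γ₁.snd = Q' := by rw [hγ₁def, Measure.snd_map_swap, hγ₀fst]
    haveI : IsProbabilityMeasure γ₁ := Measure.isProbabilityMeasure_map measurable_swap.aemeasurable
    have hIc1 : (∫⁻ z, ENNReal.ofReal ‖z.1 - z.2‖ ^ p ∂γ₁) ≤
        ENNReal.ofReal (ρ ^ p * (1 - δ)⁻¹) := by
      rw [hγ₁def, DRAux.lintegral_cost_swap]; exact hIc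
    set γ := ENNReal.ofReal (1 - δ) • γ₁ + ENNReal.ofReal δ • Δ with hγdef
    have hsum : ENNReal.ofReal (1 - δ) + ENNReal.ofReal δ = 1 := by
      rw [← ENNReal.ofReal_add (by linarith) hδpos.le]
      norm_num
    haveI hγprob : IsProbabilityMeasure γ := by
      constructor
      rw [hγdef, Measure.add_apply, Measure.smul_apply, Measure.smul_apply,
        measure_univ, measure_univ, smul_eq_mul, smul_eq_mul, mul_one, mul_one, hsum]
    have hγfst : γ.fst = Q := by
      rw [hγdef, Measure.fst_add, DRAux.fst_smul, DRAux.fst_smul, hγ₁fst, hΔfst,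
        ← add_smul, hsum, one_smul]
    have hγcost : transportCost p γ ≤ ENNReal.ofReal ρ := by
      have hint : (∫⁻ z, ENNReal.ofReal ‖z.1 - z.2‖ ^ p ∂γ) ≤ ENNReal.ofReal (ρ ^ p) := by
        rw [hγdef, lintegral_add_measure, lintegral_smul_measure, lintegral_smul_measure,
          DRAux.lintegral_cost_diag hp, smul_zero, add_zero, smul_eq_mul]
        calc ENNReal.ofReal (1 - δ) * ∫⁻ z, ENNReal.ofReal ‖z.1 - z.2‖ ^ p ∂γ₁
            ≤ ENNReal.ofReal (1 - δ) * ENNReal.ofReal (ρ ^ p * (1 - δ)⁻¹) :=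
              by gcongr
          _ = ENNReal.ofReal (ρ ^ p) := by
              rw [← ENNReal.ofReal_mul (by linarith)]
              congr 1
              field_simp
      rw [transportCost]
      calc (∫⁻ z, ENNReal.ofReal ‖z.1 - z.2‖ ^ p ∂γ) ^ (1 / p)
          ≤ (ENNReal.ofReal (ρ ^ p)) ^ (1 / p) :=
            ENNReal.rpow_le_rpow hint (by positivity)
        _ = ENNReal.ofReal ρ := by
            rw [ENNReal.ofReal_rpow_of_nonneg (Real.rpow_nonneg hρ p) (by positivity),
              ← Real.rpow_mul hρ, mul_one_div_cancel hP0, Real.rpow_one]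
    haveI : IsFiniteMeasure (ENNReal.ofReal (1 - δ) • γ₁) := by
      constructor
      rw [Measure.smul_apply, measure_univ, smul_eq_mul, mul_one]
      exact ENNReal.ofReal_lt_top
    haveI : IsFiniteMeasure (ENNReal.ofReal δ • Δ) := by
      constructor
      rw [Measure.smul_apply, measure_univ, smul_eq_mul, mul_one]
      exact ENNReal.ofReal_lt_top
    have hval : (∫ z, L z.2 ∂γ) = (1 - δ) * (∫ x, L x ∂Q') + δ * ∫ x, L x ∂Q := by
      rw [hγdef, integral_add_measure (DRAux.integrable_comp_snd hLc hLb _)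
          (DRAux.integrable_comp_snd hLc hLb _),
        integral_smul_measure, integral_smul_measure,
        ENNReal.toReal_ofReal (by linarith : (0:ℝ) ≤ 1 - δ),
        ENNReal.toReal_ofReal hδpos.le, smul_eq_mul, smul_eq_mul]
      congr 1
      · congr 1
        rw [DRAux.integral_snd_eq hLc, hγ₁snd]
      · congr 1
        rw [DRAux.integral_snd_eq hLc, hΔsnd]
    have hγmem : (∫ z, L z.2 ∂γ) ∈ S2 := ⟨γ, hγprob, hγfst, hγcost, rfl⟩
    have ha : |∫ x, L x ∂Q'| ≤ C := DRAux.abs_integral_le hLb Q'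
    have hb : |∫ x, L x ∂Q| ≤ C := DRAux.abs_integral_le hLb Q
    have hδη : δ * (2 * C + 1) ≤ η := by
      have hle : δ ≤ η / (2 * C + 1) := min_le_left _ _
      have := mul_le_mul_of_nonneg_right hle (by positivity : (0:ℝ) ≤ 2 * C + 1)
      calc δ * (2 * C + 1) ≤ (η / (2 * C + 1)) * (2 * C + 1) := this
        _ = η := by field_simp
    have hkey : (∫ x, L x ∂Q') ≤ (∫ z, L z.2 ∂γ) + η := by
      rw [hval]
      have h1 : ∫ x, L x ∂Q' ≤ C := (abs_le.mp ha).2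
      have h2 : -C ≤ ∫ x, L x ∂Q := (abs_le.mp hb).1
      have hab : (∫ x, L x ∂Q') - (∫ x, L x ∂Q) ≤ 2 * C := by linarith
      have h3 : δ * ((∫ x, L x ∂Q') - ∫ x, L x ∂Q) ≤ δ * (2 * C) :=
        mul_le_mul_of_nonneg_left hab hδpos.le
      nlinarith [hδpos.le]
    exact hkey.trans (add_le_add_left (le_csSup bdd2 hγmem) η)
  · -- zero radius: the two measures coincide
    have hW0 : wassersteinDist p Q' Q ≤ 0 := by
      rw [← hρ0] at hW
      simpa using hW
    have hQ'Q : Q' = Q := eq_of_wassersteinDist_eq_zero hp Q' Q hW0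
    have hval : (∫ x, L x ∂Q') = ∫ z, L z.2 ∂Δ := by
      rw [hQ'Q, DRAux.integral_snd_eq hLc, hΔsnd]
    rw [hval]
    exact le_csSup bdd2 hΔmem
end

section
/- Fix θ₀ ∈ ℝ^n and ρ > 0, let d_ρ : ℝ^n → [0, ∞] be the truncated cost d_ρ(x) = ‖x − θ₀‖₂ if ‖x − θ₀‖₂ ≤ ρ and d_ρ(x) = +∞ otherwise, and let L : ℝ^n → ℝ be measurable and bounded. Then the supremum, over all Borel probability measures Q̃ on ℝ^n satisfying ∫ d_ρ dQ̃ ≤ ρ (in [0, ∞]), of ∫ L dQ̃ equals sup over the closed ball {θ̃ : ‖θ̃ − θ₀‖₂ ≤ ρ} of L(θ̃). (Since the unique coupling of Q̃ with the Dirac measure δ_{θ₀} is the product measure, ∫ d_ρ dQ̃ is exactly the optimal-transport cost W_{d_ρ}(Q̃, δ_{θ₀}), so this states that distributional robustness over the W_{d_ρ}-ball around δ_{θ₀} reduces to the sharpness-aware minimization (SAM) inner maximization.) -/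
open MeasureTheory
open scoped ENNReal

/-- The truncated cost `d_ρ(x) = ‖x − θ₀‖₂` if `‖x − θ₀‖₂ ≤ ρ` and `+∞` otherwise. -/
noncomputable def truncCost {n : ℕ} (θ₀ : EuclideanSpace ℝ (Fin n)) (ρ : ℝ)
    (x : EuclideanSpace ℝ (Fin n)) : ℝ≥0∞ :=
  if ‖x - θ₀‖ ≤ ρ then ENNReal.ofReal ‖x - θ₀‖ else ⊤

/-- Distributional robustness over the `W_{d_ρ}`-ball around the Dirac measure `δ_{θ₀}`
reduces to the SAM inner maximization: the supremum of `∫ L dQ̃` over Borel probability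
measures with `∫ d_ρ dQ̃ ≤ ρ` equals the supremum of `L` over the closed ball `B_ρ(θ₀)`. -/
theorem dr_truncCost_ball_eq_sam {n : ℕ}
    (θ₀ : EuclideanSpace ℝ (Fin n)) (ρ : ℝ) (hρ : 0 < ρ)
    (L : EuclideanSpace ℝ (Fin n) → ℝ) (hL : Measurable L) (C : ℝ) (hLC : ∀ x, |L x| ≤ C) :
    sSup {r : ℝ | ∃ Q' : Measure (EuclideanSpace ℝ (Fin n)), IsProbabilityMeasure Q' ∧
        (∫⁻ x, truncCost θ₀ ρ x ∂Q') ≤ ENNReal.ofReal ρ ∧ r = ∫ x, L x ∂Q'} =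
      sSup (L '' Metric.closedBall θ₀ ρ) := by
  set S : Set ℝ := {r : ℝ | ∃ Q' : Measure (EuclideanSpace ℝ (Fin n)), IsProbabilityMeasure Q' ∧
        (∫⁻ x, truncCost θ₀ ρ x ∂Q') ≤ ENNReal.ofReal ρ ∧ r = ∫ x, L x ∂Q'} with hS
  have hball : (Metric.closedBall θ₀ ρ).Nonempty := ⟨θ₀, Metric.mem_closedBall_self hρ.le⟩
  have hbddI : BddAbove (L '' Metric.closedBall θ₀ ρ) :=
    ⟨C, by rintro _ ⟨x, -, rfl⟩; exact (abs_le.1 (hLC x)).2⟩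
  -- Dirac measures give membership
  have hdirac : ∀ θ ∈ Metric.closedBall θ₀ ρ, L θ ∈ S := by
    intro θ hθ
    refine ⟨Measure.dirac θ, inferInstance, ?_, by simp [integral_dirac]⟩
    rw [lintegral_dirac]
    have hθ' : ‖θ - θ₀‖ ≤ ρ := by
      simpa [dist_eq_norm] using Metric.mem_closedBall.mp hθ
    rw [truncCost, if_pos hθ']
    exact ENNReal.ofReal_le_ofReal hθ'
  refine le_antisymm ?_ ?_
  · refine csSup_le ⟨L θ₀, hdirac θ₀ (Metric.mem_closedBall_self hρ.le)⟩ ?_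
    rintro r ⟨Q', hQ', hcost, rfl⟩
    -- Q' is concentrated on the closed ball
    have hmeas : MeasurableSet (Metric.closedBall θ₀ ρ) :=
      measurableSet_closedBall
    have hnull : Q' (Metric.closedBall θ₀ ρ)ᶜ = 0 := by
      by_contra h
      have hpos : 0 < Q' (Metric.closedBall θ₀ ρ)ᶜ := pos_iff_ne_zero.mpr h
      have hle : ∫⁻ x in (Metric.closedBall θ₀ ρ)ᶜ, truncCost θ₀ ρ x ∂Q'
          ≤ ∫⁻ x, truncCost θ₀ ρ x ∂Q' := setLIntegral_le_lintegral _ _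
      have heq : ∫⁻ x in (Metric.closedBall θ₀ ρ)ᶜ, truncCost θ₀ ρ x ∂Q'
          = ∞ * Q' (Metric.closedBall θ₀ ρ)ᶜ := by
        rw [setLIntegral_congr_fun hmeas.compl (fun x hx => ?_),
          setLIntegral_const]
        have : ¬ ‖x - θ₀‖ ≤ ρ := by
          simp only [Set.mem_compl_iff, Metric.mem_closedBall, dist_eq_norm, not_le] at hx
          exact not_le.mpr hx
        simp [truncCost, this]
      have : (∞ : ℝ≥0∞) * Q' (Metric.closedBall θ₀ ρ)ᶜ = ∞ :=
        ENNReal.top_mul hpos.ne'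
      have : ∫⁻ x, truncCost θ₀ ρ x ∂Q' = ∞ := top_le_iff.mp (by
        calc (∞ : ℝ≥0∞) = ∞ * Q' (Metric.closedBall θ₀ ρ)ᶜ := this.symm
        _ ≤ _ := heq ▸ hle)
      rw [this] at hcost
      exact (not_le.mpr ENNReal.ofReal_lt_top) (top_le_iff.mpr (top_le_iff.mp hcost))
    have hae : ∀ᵐ x ∂Q', L x ≤ sSup (L '' Metric.closedBall θ₀ ρ) := by
      filter_upwards [measure_eq_zero_iff_ae_notMem.mp hnull] with x hx
      exact le_csSup hbddI ⟨x, not_not.mp hx, rfl⟩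
    have hInt : Integrable L Q' :=
      Integrable.mono' (integrable_const C) hL.aestronglyMeasurable (ae_of_all _ hLC)
    calc ∫ x, L x ∂Q' ≤ ∫ _, sSup (L '' Metric.closedBall θ₀ ρ) ∂Q' :=
          integral_mono_ae hInt (integrable_const _) hae
      _ = sSup (L '' Metric.closedBall θ₀ ρ) := by simp
  · refine csSup_le_csSup ?_ (hball.image L) ?_
    · refine ⟨C, ?_⟩
      rintro r ⟨Q', hQ', -, rfl⟩
      have hInt : Integrable L Q' :=
        Integrable.mono' (integrable_const C) hL.aestronglyMeasurable (ae_of_all _ hLC)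
      calc ∫ x, L x ∂Q' ≤ ∫ _, C ∂Q' :=
            integral_mono_ae hInt (integrable_const _) (ae_of_all _ fun x => (abs_le.1 (hLC x)).2)
        _ = C := by simp
    · rintro _ ⟨x, hx, rfl⟩
      exact hdirac x hx
end
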